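/- Let Γ be a finitely generated group, A a torsion-free abelian normal subgroup of Γ of finite index, C_Γ(A) the centralizer of A in Γ, and Γ̄ = Γ/C_Γ(A). Let p be either 0 or a prime. Then every p-regular element of Γ has infinite centralizer in Γ if and only if for every p-regular element x of Γ̄ and every (equivalently, some) preimage g ∈ Γ of x, there exists a ∈ A with a ≠ 1 and g a g⁻¹ = a. -/

import Mathlib

/-- Let Γ be a finitely generated group, A a torsion-free abelian normal
subgroup of finite index, C_Γ(A) its centralizer and Γ̄ = Γ/C_Γ(A). Let p be 0 or a prime.
Then every p-regular element of Γ has infinite centralizer in Γ iff for every p-regular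
element of Γ̄ and every preimage g ∈ Γ of it there exists a ∈ A with a ≠ 1 and g a g⁻¹ = a.
(p-regular: finite order not divisible by p; for p = 0, just finite order — note that for an
element of finite order, `¬ p ∣ orderOf g` with p = 0 is automatic, so the uniform phrasing
`IsOfFinOrder g ∧ ¬ p ∣ orderOf g` is correct in both cases.) -/
theorem stmt1 {Γ : Type*} [Group Γ] [Group.FG Γ] (A : Subgroup Γ) [A.Normal]
    (hA : ∀ a b : Γ, a ∈ A → b ∈ A → a * b = b * a)
    (htf : ∀ a : Γ, a ∈ A → a ≠ 1 → ¬IsOfFinOrder a)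
    [A.FiniteIndex] (p : ℕ) (hp : p = 0 ∨ p.Prime)
    [(Subgroup.centralizer (A : Set Γ)).Normal] :
    (∀ g : Γ, IsOfFinOrder g → ¬ p ∣ orderOf g → {x : Γ | x * g = g * x}.Infinite) ↔
      (∀ g : Γ,
        IsOfFinOrder (QuotientGroup.mk g : Γ ⧸ Subgroup.centralizer (A : Set Γ)) →
        ¬ p ∣ orderOf (QuotientGroup.mk g : Γ ⧸ Subgroup.centralizer (A : Set Γ)) →
        ∃ a ∈ A, a ≠ 1 ∧ g * a * g⁻¹ = a) := by
  set C := Subgroup.centralizer (A : Set Γ) with hCdef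
  constructor
  · -- hard direction
    intro hL g hfin hnd
    set n := orderOf (QuotientGroup.mk g : Γ ⧸ C) with hn
    have hn0 : n ≠ 0 := hfin.orderOf_pos.ne'
    -- g ^ n centralizes A
    have hgnC : g ^ n ∈ C := by
      have h1 : (QuotientGroup.mk g : Γ ⧸ C) ^ n = 1 := pow_orderOf_eq_one _
      have h2 : (QuotientGroup.mk (g ^ n) : Γ ⧸ C) = 1 := by
        simpa using h1
      exact (QuotientGroup.eq_one_iff _).mp h2
    -- a suitable power of g lands in A
    haveI : Finite (Γ ⧸ A) := A.finite_quotient_of_finiteIndex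
    set s := orderOf (QuotientGroup.mk (g ^ n) : Γ ⧸ A) with hs
    have hs0 : s ≠ 0 := (orderOf_pos _).ne'
    have hbA : g ^ (n * s) ∈ A := by
      have h2 : (QuotientGroup.mk (g ^ (n * s)) : Γ ⧸ A) = 1 := by
        rw [pow_mul]
        rw [QuotientGroup.mk_pow]; exact pow_orderOf_eq_one (QuotientGroup.mk (g ^ n) : Γ ⧸ A)
      exact (QuotientGroup.eq_one_iff _).mp h2
    by_cases hb : g ^ (n * s) = 1
    · -- g is torsion
      have hfing : IsOfFinOrder g :=
        isOfFinOrder_iff_pow_eq_one.mpr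
          ⟨n * s, Nat.pos_of_ne_zero (mul_ne_zero hn0 hs0), hb⟩
      have hm0 : orderOf g ≠ 0 := hfing.orderOf_pos.ne'
      obtain ⟨P, hP0, hPnd, hcop⟩ :
          ∃ P : ℕ, P ≠ 0 ∧ ¬ p ∣ orderOf (g ^ P) ∧ Nat.Coprime n P := by
        rcases hp with hp0 | hpp
        · refine ⟨1, one_ne_zero, ?_, Nat.coprime_one_right n⟩
          rw [pow_one, hp0, Nat.zero_dvd]
          exact hm0
        · refine ⟨p ^ (orderOf g).factorization p, pow_ne_zero _ hpp.ne_zero, ?_, ?_⟩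
          · have hPdvd : p ^ (orderOf g).factorization p ∣ orderOf g :=
              Nat.ordProj_dvd _ _
            rw [orderOf_pow' g (pow_ne_zero _ hpp.ne_zero),
              Nat.gcd_eq_right hPdvd]
            exact Nat.not_dvd_ordCompl hpp hm0
          · exact (((Nat.Prime.coprime_iff_not_dvd hpp).mpr hnd).symm).pow_right _
      have hinf := hL (g ^ P) (hfing.pow) hPnd
      -- extract a nontrivial element of A commuting with g ^ P
      obtain ⟨a, haA, ha1, hcomm⟩ : ∃ a ∈ A, a ≠ 1 ∧ Commute a (g ^ P) := by
        by_contra hcon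
        push_neg at hcon
        apply hinf
        apply Set.Finite.of_finite_image (f := (QuotientGroup.mk : Γ → Γ ⧸ A))
          (Set.toFinite _)
        intro x hx y hy hxy
        have hd : x⁻¹ * y ∈ A := by
          rwa [QuotientGroup.eq] at hxy
        have hcx : Commute x (g ^ P) := hx
        have hcy : Commute y (g ^ P) := hy
        have hcd : Commute (x⁻¹ * y) (g ^ P) := (hcx.inv_left).mul_left hcy
        have : x⁻¹ * y = 1 := by
          by_contra hne
          exact hcon _ hd hne hcd
        have := inv_mul_eq_one.mp this
        exact this
      -- a commutes with g ^ n since g ^ n centralizes A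
      have hc1 : Commute a (g ^ n) := Subgroup.mem_centralizer_iff.mp hgnC a haA
      -- combine via Bézout
      have hcZ : IsCoprime (n : ℤ) (P : ℤ) := Nat.isCoprime_iff_coprime.mpr hcop
      obtain ⟨u, v, huv⟩ := hcZ
      have hcg : Commute a g := by
        have e1 : (n : ℤ) * u + (P : ℤ) * v = 1 := by linarith
        have e : g = (g ^ (n : ℤ)) ^ u * (g ^ (P : ℤ)) ^ v := by
          rw [← zpow_mul, ← zpow_mul, ← zpow_add, e1, zpow_one]
        rw [e]
        have hc1' : Commute a (g ^ (n : ℤ)) := by rw [zpow_natCast]; exact hc1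
        have hc2' : Commute a (g ^ (P : ℤ)) := by rw [zpow_natCast]; exact hcomm
        exact (hc1'.zpow_right u).mul_right (hc2'.zpow_right v)
      refine ⟨a, haA, ha1, ?_⟩
      rw [mul_inv_eq_iff_eq_mul]
      exact hcg.symm.eq
    · -- g ^ (n*s) is a nontrivial fixed element of A
      refine ⟨g ^ (n * s), hbA, hb, ?_⟩
      have : Commute g (g ^ (n * s)) := Commute.pow_right (Commute.refl g) _
      rw [mul_inv_eq_iff_eq_mul]
      exact this.eq
  · -- easy direction
    intro hR g hfin hnd
    have hfin' : IsOfFinOrder (QuotientGroup.mk g : Γ ⧸ C) :=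
      (QuotientGroup.mk' C).isOfFinOrder hfin
    have hdvd : orderOf (QuotientGroup.mk g : Γ ⧸ C) ∣ orderOf g :=
      orderOf_map_dvd (QuotientGroup.mk' C) g
    obtain ⟨a, haA, ha1, hfix⟩ := hR g hfin' (fun h => hnd (h.trans hdvd))
    have hga : g * a = a * g := by rwa [mul_inv_eq_iff_eq_mul] at hfix
    have hcomm : Commute a g := hga.symm
    have hinj : Function.Injective (a ^ · : ℕ → Γ) :=
      injective_pow_iff_not_isOfFinOrder.mpr (htf a haA ha1)
    apply Set.infinite_of_injective_forall_mem hinj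
    intro k
    exact (hcomm.pow_left k).eq
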